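/- arXiv:1006.1165 — 3 statements merged into one kernel-verified Lean document; each statement's English description precedes it below -/
import Mathlib

section
/- For any feasible solution S to BLOCK-ALL (a set of ≤ F pairwise-disjoint dyadic intervals covering BL), there exists a feasible solution S' with |S'| ≤ |S| and collateral damage ≤ that of S, such that every interval in S' contains at least one blacklisted address and every interval in S' is the minimal dyadic interval containing the blacklisted addresses it covers (i.e., it is the longest common prefix of BL ∩ that interval). -/
/-- `ip` lies in the dyadic interval of prefix `q = (p, l)` in `w`-bit address space:
`[p·2^(w−l), (p+1)·2^(w−l))`. -/
def inI (w : ℕ) (q : ℕ × ℕ) (ip : ℕ) : Prop :=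
  q.1 * 2 ^ (w - q.2) ≤ ip ∧ ip < (q.1 + 1) * 2 ^ (w - q.2)

instance (w : ℕ) (q : ℕ × ℕ) (ip : ℕ) : Decidable (inI w q ip) := by
  unfold inI; infer_instance

/-- `(p, l)` is a valid prefix: `l ≤ w` and `p < 2^l`. -/
def ValidPrefix (w : ℕ) (q : ℕ × ℕ) : Prop := q.2 ≤ w ∧ q.1 < 2 ^ q.2

/-- The dyadic intervals of the prefixes in `S` are pairwise disjoint. -/
def PairwiseDisjointI (w : ℕ) (S : Finset (ℕ × ℕ)) : Prop :=
  ∀ q ∈ S, ∀ q' ∈ S, q ≠ q' → ∀ ip, ¬(inI w q ip ∧ inI w q' ip)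

lemma inI_iff (w p l ip : ℕ) : inI w (p, l) ip ↔ ip / 2 ^ (w - l) = p := by
  have hs : 0 < 2 ^ (w - l) := Nat.pow_pos (by norm_num)
  show p * 2 ^ (w - l) ≤ ip ∧ ip < (p + 1) * 2 ^ (w - l) ↔ ip / 2 ^ (w - l) = p
  constructor
  · rintro ⟨h1, h2⟩
    exact Nat.div_eq_of_lt_le h1 h2
  · rintro rfl
    refine ⟨Nat.div_mul_le_self _ _, ?_⟩
    rw [add_mul, one_mul]
    exact Nat.lt_div_mul_add hs

lemma inI_iff' (w : ℕ) (q : ℕ × ℕ) (ip : ℕ) : inI w q ip ↔ ip / 2 ^ (w - q.2) = q.1 := by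
  obtain ⟨p, l⟩ := q
  exact inI_iff w p l ip

/-- candidate prefix lengths: all elements of `A` agree with `A.sup id` on the top `l` bits. -/
def lcpSet (w : ℕ) (A : Finset ℕ) : Finset ℕ :=
  (Finset.range (w + 1)).filter (fun l => ∀ x ∈ A, x / 2 ^ (w - l) = A.sup id / 2 ^ (w - l))

/-- the minimal dyadic prefix containing `A`. -/
def lcpQ (w : ℕ) (A : Finset ℕ) : ℕ × ℕ :=
  (A.sup id / 2 ^ (w - (lcpSet w A).sup id), (lcpSet w A).sup id)

lemma lcpQ_fst (w : ℕ) (A : Finset ℕ) :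
    (lcpQ w A).1 = A.sup id / 2 ^ (w - (lcpQ w A).2) := rfl

lemma sup_mem_of_nonempty {A : Finset ℕ} (h : A.Nonempty) : A.sup id ∈ A := by
  obtain ⟨b, hb, he⟩ := Finset.exists_mem_eq_sup A h id
  rw [he]; exact hb

lemma lcpSet_nonempty (w : ℕ) (A : Finset ℕ) (hA : A.Nonempty)
    (hlt : ∀ x ∈ A, x < 2 ^ w) : (lcpSet w A).Nonempty := by
  refine ⟨0, ?_⟩
  simp only [lcpSet, Finset.mem_filter, Finset.mem_range]
  refine ⟨by omega, fun x hx => ?_⟩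
  rw [Nat.sub_zero, Nat.div_eq_of_lt (hlt x hx), Nat.div_eq_of_lt (hlt _ (sup_mem_of_nonempty hA))]

lemma lcpL_spec (w : ℕ) (A : Finset ℕ) (hA : A.Nonempty) (hlt : ∀ x ∈ A, x < 2 ^ w) :
    (lcpQ w A).2 ≤ w ∧
      ∀ x ∈ A, x / 2 ^ (w - (lcpQ w A).2) = A.sup id / 2 ^ (w - (lcpQ w A).2) := by
  have h : (lcpSet w A).sup id ∈ lcpSet w A :=
    sup_mem_of_nonempty (lcpSet_nonempty w A hA hlt)
  simp only [lcpSet, Finset.mem_filter, Finset.mem_range] at h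
  simp only [lcpQ, lcpSet]
  exact ⟨by omega, h.2⟩

lemma le_lcpL (w : ℕ) (A : Finset ℕ) {l : ℕ} (hl : l ≤ w)
    (h : ∀ x ∈ A, x / 2 ^ (w - l) = A.sup id / 2 ^ (w - l)) : l ≤ (lcpQ w A).2 := by
  simp only [lcpQ, lcpSet]
  refine Finset.le_sup (f := id) ?_
  simp only [Finset.mem_filter, Finset.mem_range]
  exact ⟨by omega, h⟩

/-- if all of `A` lies in a valid prefix `(p,l)`, then `l ≤` the lcp length. -/
lemma lcpQ_len_ge (w : ℕ) (A : Finset ℕ) (hA : A.Nonempty) {p l : ℕ} (hl : l ≤ w)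
    (h : ∀ x ∈ A, inI w (p, l) x) : l ≤ (lcpQ w A).2 := by
  have ha : A.sup id / 2 ^ (w - l) = p := (inI_iff w p l _).1 (h _ (sup_mem_of_nonempty hA))
  refine le_lcpL w A hl (fun x hx => ?_)
  rw [(inI_iff w p l x).1 (h x hx), ha]

lemma lcpQ_valid (w : ℕ) (A : Finset ℕ) (hA : A.Nonempty) (hlt : ∀ x ∈ A, x < 2 ^ w) :
    ValidPrefix w (lcpQ w A) := by
  obtain ⟨hLw, _⟩ := lcpL_spec w A hA hlt
  refine ⟨hLw, ?_⟩
  rw [lcpQ_fst]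
  have hs : 0 < 2 ^ (w - (lcpQ w A).2) := Nat.pow_pos (by norm_num)
  refine (Nat.div_lt_iff_lt_mul hs).2 ?_
  calc A.sup id < 2 ^ w := hlt _ (sup_mem_of_nonempty hA)
    _ = 2 ^ (lcpQ w A).2 * 2 ^ (w - (lcpQ w A).2) := by rw [← pow_add]; congr 1; omega

lemma lcpQ_mem (w : ℕ) (A : Finset ℕ) (hA : A.Nonempty) (hlt : ∀ x ∈ A, x < 2 ^ w) :
    ∀ x ∈ A, inI w (lcpQ w A) x := by
  intro x hx
  rw [inI_iff', lcpQ_fst]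
  exact (lcpL_spec w A hA hlt).2 x hx

/-- agreement at depth `L` implies agreement at any shallower depth `l ≤ L`. -/
lemma div_agree_mono (w l L x a : ℕ) (hlL : l ≤ L) (hL : L ≤ w)
    (h : x / 2 ^ (w - L) = a / 2 ^ (w - L)) : x / 2 ^ (w - l) = a / 2 ^ (w - l) := by
  have hw : w - l = (w - L) + (L - l) := by omega
  rw [hw, pow_add, ← Nat.div_div_eq_div_mul, ← Nat.div_div_eq_div_mul, h]

/-- the lcp interval is contained in any valid dyadic interval containing `A`. -/
lemma lcpQ_sub (w : ℕ) (A : Finset ℕ) (hA : A.Nonempty) (hlt : ∀ x ∈ A, x < 2 ^ w)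
    {p l : ℕ} (hl : l ≤ w) (h : ∀ x ∈ A, inI w (p, l) x) :
    ∀ ip, inI w (lcpQ w A) ip → inI w (p, l) ip := by
  intro ip hip
  obtain ⟨hLw, _⟩ := lcpL_spec w A hA hlt
  have hlL : l ≤ (lcpQ w A).2 := lcpQ_len_ge w A hA hl h
  rw [inI_iff', lcpQ_fst] at hip
  rw [inI_iff]
  have h2 : ip / 2 ^ (w - l) = A.sup id / 2 ^ (w - l) :=
    div_agree_mono w l ((lcpQ w A).2) ip (A.sup id) hlL hLw hip
  have h3 : A.sup id / 2 ^ (w - l) = p := (inI_iff w p l _).1 (h _ (sup_mem_of_nonempty hA))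
  rw [h2, h3]

lemma lt_add_of_div_eq {x0 x1 s : ℕ} (hs : 0 < s) (h : x0 / s = x1 / s) : x1 < x0 + s :=
  calc x1 < x1 / s * s + s := Nat.lt_div_mul_add hs
    _ = x0 / s * s + s := by rw [h]
    _ ≤ x0 + s := Nat.add_le_add_right (Nat.div_mul_le_self x0 s) s

/-- an interval contained in another has smaller-or-equal size, i.e. a longer-or-equal prefix. -/
lemma len_le_of_sub (w p l : ℕ) (q2 : ℕ × ℕ) (hl : l ≤ w) (hl2 : q2.2 ≤ w)
    (h : ∀ ip, inI w (p, l) ip → inI w q2 ip) : q2.2 ≤ l := by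
  have hs : 0 < 2 ^ (w - l) := Nat.pow_pos (by norm_num)
  have hs2 : 0 < 2 ^ (w - q2.2) := Nat.pow_pos (by norm_num)
  have e0 : inI w (p, l) (2 ^ (w - l) * p) := by
    rw [inI_iff]
    exact Nat.mul_div_cancel_left p hs
  have e1 : inI w (p, l) (2 ^ (w - l) * p + (2 ^ (w - l) - 1)) := by
    rw [inI_iff, Nat.mul_add_div hs, Nat.div_eq_of_lt (by omega)]; omega
  have f0 := (inI_iff' w q2 _).1 (h _ e0)
  have f1 := (inI_iff' w q2 _).1 (h _ e1)
  have key := lt_add_of_div_eq hs2 (f0.trans f1.symm)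
  have hgen : ∀ X : ℕ, X + (2 ^ (w - l) - 1) < X + 2 ^ (w - q2.2) →
      2 ^ (w - l) ≤ 2 ^ (w - q2.2) := by
    intro X hX; omega
  have hle := (Nat.pow_le_pow_iff_right (show 1 < 2 by norm_num)).1 (hgen _ key)
  omega

/-- minimality: any valid interval containing `A` and contained in the lcp interval
coincides with it. -/
lemma lcpQ_min (w : ℕ) (A : Finset ℕ) (hA : A.Nonempty) (hlt : ∀ x ∈ A, x < 2 ^ w)
    {p l : ℕ} (hval : ValidPrefix w (p, l)) (h : ∀ x ∈ A, inI w (p, l) x)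
    (hsub : ∀ ip, inI w (p, l) ip → inI w (lcpQ w A) ip) :
    ∀ ip, inI w (p, l) ip ↔ inI w (lcpQ w A) ip := by
  obtain ⟨hLw, _⟩ := lcpL_spec w A hA hlt
  have hlL : l ≤ (lcpQ w A).2 := lcpQ_len_ge w A hA hval.1 h
  have hLl : (lcpQ w A).2 ≤ l := len_le_of_sub w p l (lcpQ w A) hval.1 hLw hsub
  have heq : l = (lcpQ w A).2 := le_antisymm hlL hLl
  have ha1 : A.sup id / 2 ^ (w - l) = p :=
    (inI_iff w p l _).1 (h _ (sup_mem_of_nonempty hA))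
  have ha2 : A.sup id / 2 ^ (w - (lcpQ w A).2) = (lcpQ w A).1 :=
    (inI_iff' w _ _).1 (lcpQ_mem w A hA hlt _ (sup_mem_of_nonempty hA))
  intro ip
  rw [inI_iff, inI_iff', ← ha1, ← ha2, heq]

lemma sum_img_le {α β : Type*} [DecidableEq β] (t : Finset α) (f : α → β) (g : β → ℝ)
    (hnn : ∀ x ∈ t, 0 ≤ g (f x)) : ∑ y ∈ t.image f, g y ≤ ∑ x ∈ t, g (f x) := by
  classical
  induction t using Finset.induction with
  | empty => simp
  | @insert a s ha ih =>
    rw [Finset.image_insert, Finset.sum_insert ha]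
    have ih' := ih (fun x hx => hnn x (Finset.mem_insert_of_mem hx))
    by_cases hfa : f a ∈ s.image f
    · rw [Finset.insert_eq_self.mpr hfa]
      have := hnn a (Finset.mem_insert_self a s)
      linarith
    · rw [Finset.sum_insert hfa]
      exact add_le_add le_rfl ih'

/-- Any feasible BLOCK-ALL solution can be transformed into one that is no larger, no more
damaging, and in which every interval contains a blacklisted address and is the minimal
dyadic interval (longest common prefix) of the blacklisted addresses it covers. -/
theorem stmt7 (w : ℕ) (BL WL : Finset ℕ) (wgt : ℕ → ℝ)
    (hwgt : ∀ ip ∈ WL, 0 ≤ wgt ip) (hsub : ∀ ip ∈ BL, ip < 2 ^ w)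
    (S : Finset (ℕ × ℕ))
    (hvalid : ∀ q ∈ S, ValidPrefix w q)
    (hdisj : PairwiseDisjointI w S)
    (hcover : ∀ ip ∈ BL, ∃ q ∈ S, inI w q ip) :
    ∃ S' : Finset (ℕ × ℕ),
      (∀ q ∈ S', ValidPrefix w q) ∧
      S'.card ≤ S.card ∧
      PairwiseDisjointI w S' ∧
      (∀ ip ∈ BL, ∃ q ∈ S', inI w q ip) ∧
      (∑ q ∈ S', ∑ ip ∈ WL.filter (fun ip => inI w q ip), wgt ip) ≤
        (∑ q ∈ S, ∑ ip ∈ WL.filter (fun ip => inI w q ip), wgt ip) ∧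
      ∀ q ∈ S',
        (∃ ip ∈ BL, inI w q ip) ∧
        ∀ q', ValidPrefix w q' →
          (∀ ip ∈ BL, inI w q ip → inI w q' ip) →
          (∀ ip, inI w q' ip → inI w q ip) →
          (∀ ip, inI w q' ip ↔ inI w q ip) := by
  classical
  set Aof : ℕ × ℕ → Finset ℕ := fun q => BL.filter (fun ip => inI w q ip) with hAof
  set f : ℕ × ℕ → ℕ × ℕ := fun q => lcpQ w (Aof q) with hf
  set T : Finset (ℕ × ℕ) := S.filter (fun q => (Aof q).Nonempty) with hT
  have hAlt : ∀ q, ∀ x ∈ Aof q, x < 2 ^ w := fun q x hx =>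
    hsub x (Finset.mem_filter.1 hx).1
  have hAne : ∀ q ∈ T, (Aof q).Nonempty := fun q hq => (Finset.mem_filter.1 hq).2
  have key : ∀ q ∈ T,
      ValidPrefix w (f q) ∧ (∀ x ∈ Aof q, inI w (f q) x) ∧
      (∀ ip, inI w (f q) ip → inI w q ip) := by
    intro q hq
    obtain ⟨hqS, hne⟩ := Finset.mem_filter.1 hq
    have hlt := hAlt q
    have hAq : ∀ x ∈ Aof q, inI w (q.1, q.2) x := fun x hx => (Finset.mem_filter.1 hx).2
    exact ⟨lcpQ_valid w (Aof q) hne hlt, lcpQ_mem w (Aof q) hne hlt,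
      lcpQ_sub w (Aof q) hne hlt (hvalid q hqS).1 hAq⟩
  refine ⟨T.image f, ?_, ?_, ?_, ?_, ?_, ?_⟩
  · intro q hq
    obtain ⟨o, ho, rfl⟩ := Finset.mem_image.1 hq
    exact (key o ho).1
  · calc (T.image f).card ≤ T.card := Finset.card_image_le
      _ ≤ S.card := Finset.card_filter_le _ _
  · rintro q1 hq1 q2 hq2 hne ip ⟨h1, h2⟩
    obtain ⟨o1, ho1, rfl⟩ := Finset.mem_image.1 hq1
    obtain ⟨o2, ho2, rfl⟩ := Finset.mem_image.1 hq2
    have hone : o1 ≠ o2 := fun h => hne (by rw [h])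
    exact hdisj o1 (Finset.mem_filter.1 ho1).1 o2 (Finset.mem_filter.1 ho2).1 hone ip
      ⟨(key o1 ho1).2.2 ip h1, (key o2 ho2).2.2 ip h2⟩
  · intro ip hip
    obtain ⟨q, hqS, hqip⟩ := hcover ip hip
    have hipA : ip ∈ Aof q := Finset.mem_filter.2 ⟨hip, hqip⟩
    have hqT : q ∈ T := Finset.mem_filter.2 ⟨hqS, ⟨ip, hipA⟩⟩
    exact ⟨f q, Finset.mem_image_of_mem f hqT, (key q hqT).2.1 ip hipA⟩
  · have step1 : ∑ q ∈ T.image f, ∑ ip ∈ WL.filter (fun ip => inI w q ip), wgt ip ≤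
        ∑ q ∈ T, ∑ ip ∈ WL.filter (fun ip => inI w (f q) ip), wgt ip := by
      refine sum_img_le T f _ (fun q hq => ?_)
      exact Finset.sum_nonneg (fun ip hip => hwgt ip (Finset.mem_filter.1 hip).1)
    have step2 : ∑ q ∈ T, ∑ ip ∈ WL.filter (fun ip => inI w (f q) ip), wgt ip ≤
        ∑ q ∈ T, ∑ ip ∈ WL.filter (fun ip => inI w q ip), wgt ip := by
      refine Finset.sum_le_sum (fun q hq => ?_)
      refine Finset.sum_le_sum_of_subset_of_nonneg ?_
        (fun ip hip _ => hwgt ip (Finset.mem_filter.1 hip).1)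
      intro ip hip
      obtain ⟨h1, h2⟩ := Finset.mem_filter.1 hip
      exact Finset.mem_filter.2 ⟨h1, (key q hq).2.2 ip h2⟩
    have step3 : ∑ q ∈ T, ∑ ip ∈ WL.filter (fun ip => inI w q ip), wgt ip ≤
        ∑ q ∈ S, ∑ ip ∈ WL.filter (fun ip => inI w q ip), wgt ip := by
      refine Finset.sum_le_sum_of_subset_of_nonneg (Finset.filter_subset _ _)
        (fun q _ _ => Finset.sum_nonneg (fun ip hip => hwgt ip (Finset.mem_filter.1 hip).1))
    linarith
  · intro q hq
    obtain ⟨o, ho, rfl⟩ := Finset.mem_image.1 hq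
    have hne := hAne o ho
    have hlt := hAlt o
    have haA : (Aof o).sup id ∈ Aof o := sup_mem_of_nonempty hne
    refine ⟨⟨(Aof o).sup id, (Finset.mem_filter.1 haA).1,
      lcpQ_mem w (Aof o) hne hlt _ haA⟩, ?_⟩
    rintro ⟨p', l'⟩ hval' hBLsub hq'sub ip
    have hAq' : ∀ x ∈ Aof o, inI w (p', l') x := fun x hx =>
      hBLsub x (Finset.mem_filter.1 hx).1 (lcpQ_mem w (Aof o) hne hlt x hx)
    exact lcpQ_min w (Aof o) hne hlt hval' hAq' hq'sub ip
end

section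
/- BLOCK-ALL dynamic-programming recursion: let D be a dyadic interval whose both halves D_L, D_R meet BL, and for F ≥ 2 let z_D(F) denote the minimum collateral damage of covering BL ∩ D by at most F pairwise-disjoint dyadic subintervals of D. Then z_D(F) = min over n = 1,…,F−1 of ( z_{D_L}(F−n) + z_{D_R}(n) ), and z_D(1) = Σ_{ip ∈ WL ∩ D} w(ip). -/
/-- `zBA w BL WL wgt D F`: minimum collateral damage of covering `BL ∩ D` by at most `F`
pairwise-disjoint dyadic subintervals of `D`. -/
noncomputable def zBA (w : ℕ) (BL WL : Finset ℕ) (wgt : ℕ → ℝ) (D : ℕ × ℕ) (F : ℕ) : ℝ :=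
  sInf {x : ℝ | ∃ S : Finset (ℕ × ℕ),
    (∀ q ∈ S, ValidPrefix w q ∧ ∀ ip, inI w q ip → inI w D ip) ∧
    S.card ≤ F ∧ PairwiseDisjointI w S ∧
    (∀ ip ∈ BL, inI w D ip → ∃ q ∈ S, inI w q ip) ∧
    x = ∑ q ∈ S, ∑ ip ∈ WL.filter (fun ip => inI w q ip), wgt ip}

lemma pow_split {w l : ℕ} (hl : l < w) : 2 ^ (w - l) = 2 * 2 ^ (w - (l+1)) := by
  have h : w - l = (w - (l+1)) + 1 := by omega
  rw [h, pow_succ]; ring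

lemma left_sub {w p l : ℕ} (hl : l < w) {ip : ℕ} (h : inI w (2*p, l+1) ip) :
    inI w (p, l) ip := by
  obtain ⟨h1, h2⟩ := h
  have hB := pow_split hl
  simp only [inI] at *
  constructor
  · rw [hB]; nlinarith
  · rw [hB]; nlinarith

lemma right_sub {w p l : ℕ} (hl : l < w) {ip : ℕ} (h : inI w (2*p+1, l+1) ip) :
    inI w (p, l) ip := by
  obtain ⟨h1, h2⟩ := h
  have hB := pow_split hl
  simp only [inI] at *
  constructor
  · rw [hB]; nlinarith
  · rw [hB]; nlinarith

lemma half_split {w p l : ℕ} (hl : l < w) {ip : ℕ} (h : inI w (p, l) ip) :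
    inI w (2*p, l+1) ip ∨ inI w (2*p+1, l+1) ip := by
  obtain ⟨h1, h2⟩ := h
  have hB := pow_split hl
  simp only [inI] at *
  rcases lt_or_ge ip ((2*p+1) * 2 ^ (w - (l+1))) with hc | hc
  · left; exact ⟨by nlinarith, hc⟩
  · right; exact ⟨hc, by nlinarith⟩

lemma half_disj {w p l : ℕ} (ip : ℕ) :
    ¬(inI w (2*p, l+1) ip ∧ inI w (2*p+1, l+1) ip) := by
  rintro ⟨⟨_, h1⟩, ⟨h2, _⟩⟩
  exact absurd h1 (not_lt.2 h2)

lemma inI_self {w : ℕ} (q : ℕ × ℕ) : inI w q (q.1 * 2 ^ (w - q.2)) := by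
  refine ⟨le_rfl, ?_⟩
  have : (0:ℕ) < 2 ^ (w - q.2) := Nat.pow_pos (by norm_num)
  nlinarith

lemma dichotomy {w p l p' l' : ℕ} (hl : l < w) (hl' : l' ≤ w)
    (hsub : ∀ ip, inI w (p', l') ip → inI w (p, l) ip) :
    (∀ ip, inI w (p', l') ip → inI w (2*p, l+1) ip) ∨
    (∀ ip, inI w (p', l') ip → inI w (2*p+1, l+1) ip) ∨
    (∀ ip, inI w (p, l) ip → inI w (p', l') ip) := by
  have hB'pos : (0:ℕ) < 2 ^ (w - l') := Nat.pow_pos (by norm_num)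
  have hBpos : (0:ℕ) < 2 ^ (w - l) := Nat.pow_pos (by norm_num)
  have he : inI w (p', l') (p' * 2 ^ (w - l')) := inI_self _
  rcases le_or_gt l' l with hle | hlt
  · -- then intervals coincide
    right; right
    have hBle : 2 ^ (w - l) ≤ 2 ^ (w - l') := Nat.pow_le_pow_right (by norm_num) (by omega)
    have h1 := hsub _ he
    have he2 : inI w (p', l') ((p'+1) * 2 ^ (w - l') - 1) := by
      constructor
      · simp only [add_one_mul]; omega
      · simp only [add_one_mul]; omega
    have h2 := hsub _ he2
    simp only [inI, add_one_mul] at h1 h2 ⊢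
    intro ip hip
    constructor
    · omega
    · omega
  · -- q is contained in one half
    set k := l' - (l + 1) with hk
    set m := p' / 2 ^ k with hm
    have hkpos : (0:ℕ) < 2 ^ k := Nat.pow_pos (by norm_num)
    have hsplitexp : w - (l+1) = (w - l') + k := by omega
    have hBsplit : 2 ^ (w - (l+1)) = 2 ^ (w - l') * 2 ^ k := by rw [hsplitexp, pow_add]
    have hdm := Nat.div_add_mod p' (2 ^ k)
    have hmod := Nat.mod_lt p' hkpos
    have hm1 : m * 2 ^ k ≤ p' := Nat.div_mul_le_self _ _
    have hm2 : p' < (m + 1) * 2 ^ k := by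
      rw [add_one_mul, hm]
      exact Nat.lt_div_mul_add hkpos
    have hcont : ∀ ip, inI w (p', l') ip → inI w (m, l+1) ip := by
      rintro ip ⟨h1, h2⟩
      constructor
      · calc m * 2 ^ (w - (l+1)) = (m * 2 ^ k) * 2 ^ (w - l') := by rw [hBsplit]; ring
          _ ≤ p' * 2 ^ (w - l') := Nat.mul_le_mul_right _ hm1
          _ ≤ ip := h1
      · calc ip < (p' + 1) * 2 ^ (w - l') := h2
          _ ≤ ((m + 1) * 2 ^ k) * 2 ^ (w - l') := Nat.mul_le_mul_right _ (by omega)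
          _ = (m + 1) * 2 ^ (w - (l+1)) := by rw [hBsplit]; ring
    have hmeq : m = 2 * p ∨ m = 2 * p + 1 := by
      have hc1 := hcont _ he
      have hc2 := hsub _ he
      obtain ⟨a1, a2⟩ := hc1
      obtain ⟨b1, b2⟩ := hc2
      have hB := pow_split hl
      rw [hB] at b1 b2
      by_contra hcon
      push_neg at hcon
      have : m + 1 ≤ 2 * p ∨ 2 * p + 2 ≤ m := by omega
      rcases this with hc | hc
      · have := Nat.mul_le_mul_right (2 ^ (w - (l+1))) hc
        nlinarith
      · have := Nat.mul_le_mul_right (2 ^ (w - (l+1))) hc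
        nlinarith
    rcases hmeq with h | h
    · left; intro ip hip; have := hcont ip hip; rwa [h] at this
    · right; left; intro ip hip; have := hcont ip hip; rwa [h] at this


def zSet (w : ℕ) (BL WL : Finset ℕ) (wgt : ℕ → ℝ) (D : ℕ × ℕ) (F : ℕ) : Set ℝ :=
  {x : ℝ | ∃ S : Finset (ℕ × ℕ),
    (∀ q ∈ S, ValidPrefix w q ∧ ∀ ip, inI w q ip → inI w D ip) ∧
    S.card ≤ F ∧ PairwiseDisjointI w S ∧
    (∀ ip ∈ BL, inI w D ip → ∃ q ∈ S, inI w q ip) ∧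
    x = ∑ q ∈ S, ∑ ip ∈ WL.filter (fun ip => inI w q ip), wgt ip}

variable {w F : ℕ} {BL WL : Finset ℕ} {wgt : ℕ → ℝ} {D : ℕ × ℕ}


lemma singleton_mem (hD : ValidPrefix w D) (hF : 1 ≤ F) :
    (∑ ip ∈ WL.filter (fun ip => inI w D ip), wgt ip) ∈ zSet w BL WL wgt D F := by
  classical
  refine ⟨{D}, ?_, ?_, ?_, ?_, ?_⟩
  · intro q hq; rw [Finset.mem_singleton] at hq; subst hq; exact ⟨hD, fun _ h => h⟩
  · simpa using hF
  · intro q hq q' hq' hne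
    rw [Finset.mem_singleton] at hq hq'; subst hq; subst hq'; exact absurd rfl hne
  · intro ip _ hip; exact ⟨D, Finset.mem_singleton_self _, hip⟩
  · rw [Finset.sum_singleton]

lemma zSet_nonneg (hwgt : ∀ ip ∈ WL, 0 ≤ wgt ip) :
    ∀ x ∈ zSet w BL WL wgt D F, (0:ℝ) ≤ x := by
  rintro x ⟨S, _, _, _, _, rfl⟩
  refine Finset.sum_nonneg fun q _ => Finset.sum_nonneg fun ip hip => ?_
  exact hwgt ip (Finset.mem_filter.1 hip).1

lemma zSet_bdd (hwgt : ∀ ip ∈ WL, 0 ≤ wgt ip) :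
    BddBelow (zSet w BL WL wgt D F) := ⟨0, fun x hx => zSet_nonneg hwgt x hx⟩

lemma zBA_le_of_mem (hwgt : ∀ ip ∈ WL, 0 ≤ wgt ip) {x : ℝ}
    (hx : x ∈ zSet w BL WL wgt D F) : zBA w BL WL wgt D F ≤ x :=
  csInf_le (zSet_bdd hwgt) hx

lemma zBA_nonneg (hwgt : ∀ ip ∈ WL, 0 ≤ wgt ip)
    (hne : (zSet w BL WL wgt D F).Nonempty) : 0 ≤ zBA w BL WL wgt D F :=
  le_csInf hne (zSet_nonneg hwgt)

lemma zBA_eq (w : ℕ) (BL WL : Finset ℕ) (wgt : ℕ → ℝ) (D : ℕ × ℕ) (F : ℕ) :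
    zBA w BL WL wgt D F = sInf (zSet w BL WL wgt D F) := rfl


lemma union_mem {p l n : ℕ} (hl : l < w) (hnF : n ≤ F) {a b : ℝ}
    (ha : a ∈ zSet w BL WL wgt (2*p, l+1) (F - n))
    (hb : b ∈ zSet w BL WL wgt (2*p+1, l+1) n) :
    a + b ∈ zSet w BL WL wgt (p, l) F := by
  classical
  obtain ⟨SL, hL1, hL2, hL3, hL4, rfl⟩ := ha
  obtain ⟨SR, hR1, hR2, hR3, hR4, rfl⟩ := hb
  have hdisj : Disjoint SL SR := by
    rw [Finset.disjoint_left]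
    intro q hqL hqR
    have h1 := (hL1 q hqL).2 _ (inI_self q)
    have h2 := (hR1 q hqR).2 _ (inI_self q)
    exact half_disj _ ⟨h1, h2⟩
  refine ⟨SL ∪ SR, ?_, ?_, ?_, ?_, ?_⟩
  · intro q hq
    rcases Finset.mem_union.1 hq with h | h
    · exact ⟨(hL1 q h).1, fun ip hip => left_sub hl ((hL1 q h).2 ip hip)⟩
    · exact ⟨(hR1 q h).1, fun ip hip => right_sub hl ((hR1 q h).2 ip hip)⟩
  · calc (SL ∪ SR).card ≤ SL.card + SR.card := Finset.card_union_le _ _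
      _ ≤ (F - n) + n := Nat.add_le_add hL2 hR2
      _ ≤ F := by omega
  · rintro q hq q' hq' hne ip ⟨h1, h2⟩
    rcases Finset.mem_union.1 hq with h | h <;> rcases Finset.mem_union.1 hq' with h' | h'
    · exact hL3 q h q' h' hne ip ⟨h1, h2⟩
    · exact half_disj ip ⟨(hL1 q h).2 ip h1, (hR1 q' h').2 ip h2⟩
    · exact half_disj ip ⟨(hL1 q' h').2 ip h2, (hR1 q h).2 ip h1⟩
    · exact hR3 q h q' h' hne ip ⟨h1, h2⟩
  · intro ip hip hin
    rcases half_split hl hin with h | h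
    · obtain ⟨q, hq, hq2⟩ := hL4 ip hip h
      exact ⟨q, Finset.mem_union_left _ hq, hq2⟩
    · obtain ⟨q, hq, hq2⟩ := hR4 ip hip h
      exact ⟨q, Finset.mem_union_right _ hq, hq2⟩
  · rw [Finset.sum_union hdisj]

lemma weight_split {p l : ℕ} (hl : l < w) :
    (∑ ip ∈ WL.filter (fun ip => inI w (2*p, l+1) ip), wgt ip) +
    (∑ ip ∈ WL.filter (fun ip => inI w (2*p+1, l+1) ip), wgt ip) =
    ∑ ip ∈ WL.filter (fun ip => inI w (p, l) ip), wgt ip := by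
  classical
  rw [← Finset.sum_union]
  · congr 1
    ext ip
    simp only [Finset.mem_union, Finset.mem_filter]
    constructor
    · rintro (⟨h1, h2⟩ | ⟨h1, h2⟩)
      · exact ⟨h1, left_sub hl h2⟩
      · exact ⟨h1, right_sub hl h2⟩
    · rintro ⟨h1, h2⟩
      rcases half_split hl h2 with h | h
      · exact Or.inl ⟨h1, h⟩
      · exact Or.inr ⟨h1, h⟩
  · rw [Finset.disjoint_left]
    rintro ip h1 h2
    exact half_disj ip ⟨(Finset.mem_filter.1 h1).2, (Finset.mem_filter.1 h2).2⟩

/-- BLOCK-ALL dynamic-programming recursion: if both halves of `D` meet the blacklist,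
then for `F ≥ 2`, `z_D(F) = min over n = 1,…,F−1 of z_{D_L}(F−n) + z_{D_R}(n)`,
and `z_D(1)` equals the good weight of `D`. -/
theorem stmt10 (w p l F : ℕ) (BL WL : Finset ℕ) (wgt : ℕ → ℝ)
    (hwgt : ∀ ip ∈ WL, 0 ≤ wgt ip)
    (hl : l < w) (hp : p < 2 ^ l)
    (hLme : ∃ ip ∈ BL, inI w (2 * p, l + 1) ip)
    (hRme : ∃ ip ∈ BL, inI w (2 * p + 1, l + 1) ip)
    (hF : 2 ≤ F) :
    zBA w BL WL wgt (p, l) F =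
      sInf {x : ℝ | ∃ n, 1 ≤ n ∧ n ≤ F - 1 ∧
        x = zBA w BL WL wgt (2 * p, l + 1) (F - n) +
            zBA w BL WL wgt (2 * p + 1, l + 1) n} ∧
    zBA w BL WL wgt (p, l) 1 = ∑ ip ∈ WL.filter (fun ip => inI w (p, l) ip), wgt ip := by
  classical
  obtain ⟨ipL, hipLB, hipL⟩ := hLme
  obtain ⟨ipR, hipRB, hipR⟩ := hRme
  have hDval : ValidPrefix w (p, l) := ⟨le_of_lt hl, hp⟩
  have hpl : 2 * p + 1 < 2 ^ (l + 1) := by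
    have h2 : 2 ^ (l + 1) = 2 * 2 ^ l := by rw [pow_succ]; ring
    linarith
  have hLval : ValidPrefix w (2 * p, l + 1) := ⟨hl, by simp only []; omega⟩
  have hRval : ValidPrefix w (2 * p + 1, l + 1) := ⟨hl, hpl⟩
  have hneD : ∀ m, 1 ≤ m → (zSet w BL WL wgt (p, l) m).Nonempty :=
    fun m hm => ⟨_, singleton_mem hDval hm⟩
  have hneL : ∀ m, 1 ≤ m → (zSet w BL WL wgt (2 * p, l + 1) m).Nonempty :=
    fun m hm => ⟨_, singleton_mem hLval hm⟩
  have hneR : ∀ m, 1 ≤ m → (zSet w BL WL wgt (2 * p + 1, l + 1) m).Nonempty :=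
    fun m hm => ⟨_, singleton_mem hRval hm⟩
  have hRbdd : BddBelow {x : ℝ | ∃ n, 1 ≤ n ∧ n ≤ F - 1 ∧
      x = zBA w BL WL wgt (2 * p, l + 1) (F - n) +
          zBA w BL WL wgt (2 * p + 1, l + 1) n} := by
    refine ⟨0, ?_⟩
    rintro x ⟨n, hn1, hn2, rfl⟩
    have h1 := zBA_nonneg hwgt (hneL (F - n) (by omega))
    have h2 := zBA_nonneg hwgt (hneR n hn1)
    linarith
  constructor
  · refine le_antisymm ?_ ?_
    · refine le_csInf ⟨_, 1, le_rfl, by omega, rfl⟩ ?_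
      rintro x ⟨n, hn1, hn2, rfl⟩
      have hLn := hneL (F - n) (by omega)
      have hRn := hneR n hn1
      have key : ∀ a ∈ zSet w BL WL wgt (2 * p, l + 1) (F - n),
          ∀ b ∈ zSet w BL WL wgt (2 * p + 1, l + 1) n,
          zBA w BL WL wgt (p, l) F ≤ a + b := by
        intro a ha b hb
        exact zBA_le_of_mem hwgt (union_mem hl (by omega) ha hb)
      have h1 : ∀ b ∈ zSet w BL WL wgt (2 * p + 1, l + 1) n,
          zBA w BL WL wgt (p, l) F ≤ zBA w BL WL wgt (2 * p, l + 1) (F - n) + b := by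
        intro b hb
        have : zBA w BL WL wgt (p, l) F - b ≤ zBA w BL WL wgt (2 * p, l + 1) (F - n) :=
          le_csInf hLn (fun a ha => by linarith [key a ha b hb])
        linarith
      have h2 : zBA w BL WL wgt (p, l) F - zBA w BL WL wgt (2 * p, l + 1) (F - n) ≤
          zBA w BL WL wgt (2 * p + 1, l + 1) n :=
        le_csInf hRn (fun b hb => by linarith [h1 b hb])
      linarith
    · refine le_csInf (hneD F (by omega)) ?_
      rintro x ⟨S, hS1, hS2, hS3, hS4, rfl⟩
      by_cases hfull : ∃ q ∈ S, ∀ ip, inI w (p, l) ip → inI w q ip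
      · obtain ⟨q, hqS, hq⟩ := hfull
        have hfilt : WL.filter (fun ip => inI w q ip) = WL.filter (fun ip => inI w (p, l) ip) := by
          ext ip
          simp only [Finset.mem_filter]
          exact and_congr_right fun _ => ⟨fun h => (hS1 q hqS).2 ip h, fun h => hq ip h⟩
        have hle : (∑ ip ∈ WL.filter (fun ip => inI w (p, l) ip), wgt ip) ≤
            ∑ q' ∈ S, ∑ ip ∈ WL.filter (fun ip => inI w q' ip), wgt ip := by
          rw [← hfilt]
          refine Finset.single_le_sum (f := fun q' =>
            ∑ ip ∈ WL.filter (fun ip => inI w q' ip), wgt ip) ?_ hqS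
          intro i _
          exact Finset.sum_nonneg fun ip hip => hwgt ip (Finset.mem_filter.1 hip).1
        have h1 : zBA w BL WL wgt (2 * p, l + 1) (F - 1) ≤
            ∑ ip ∈ WL.filter (fun ip => inI w (2 * p, l + 1) ip), wgt ip :=
          zBA_le_of_mem hwgt (singleton_mem hLval (by omega))
        have h2 : zBA w BL WL wgt (2 * p + 1, l + 1) 1 ≤
            ∑ ip ∈ WL.filter (fun ip => inI w (2 * p + 1, l + 1) ip), wgt ip :=
          zBA_le_of_mem hwgt (singleton_mem hRval le_rfl)
        have hsplit := weight_split (w := w) (WL := WL) (wgt := wgt) (p := p) hl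
        have hinf : sInf {x : ℝ | ∃ n, 1 ≤ n ∧ n ≤ F - 1 ∧
            x = zBA w BL WL wgt (2 * p, l + 1) (F - n) +
                zBA w BL WL wgt (2 * p + 1, l + 1) n} ≤
            zBA w BL WL wgt (2 * p, l + 1) (F - 1) + zBA w BL WL wgt (2 * p + 1, l + 1) 1 :=
          csInf_le hRbdd ⟨1, le_rfl, by omega, rfl⟩
        linarith
      · push_neg at hfull
        set P : ℕ × ℕ → Prop := fun q => ∀ ip, inI w q ip → inI w (2 * p + 1, l + 1) ip with hP
        have hdi : ∀ q ∈ S, (∀ ip, inI w q ip → inI w (2 * p, l + 1) ip) ∨ P q := by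
          intro q hqS
          rcases dichotomy hl (hS1 q hqS).1.1 (hS1 q hqS).2 with h | h | h
          · exact Or.inl h
          · exact Or.inr h
          · obtain ⟨ip0, hip0⟩ := hfull q hqS
            exact absurd (h ip0 hip0.1) hip0.2
        set SR := S.filter P with hSR
        set SL := S.filter (fun q => ¬ P q) with hSL
        have hmemL : ∀ q ∈ SL, ∀ ip, inI w q ip → inI w (2 * p, l + 1) ip := by
          intro q hq
          rw [hSL, Finset.mem_filter] at hq
          rcases hdi q hq.1 with h | h
          · exact h
          · exact absurd h hq.2
        have hcards : SR.card + SL.card = S.card := by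
          rw [hSR, hSL]
          exact Finset.card_filter_add_card_filter_not (p := P)
        obtain ⟨qR, hqRS, hqRcov⟩ := hS4 ipR hipRB (right_sub hl hipR)
        have hqRSR : qR ∈ SR := by
          rw [hSR, Finset.mem_filter]
          refine ⟨hqRS, ?_⟩
          rcases hdi qR hqRS with h | h
          · exact absurd ⟨h ipR hqRcov, hipR⟩ (half_disj ipR)
          · exact h
        obtain ⟨qL, hqLS, hqLcov⟩ := hS4 ipL hipLB (left_sub hl hipL)
        have hqLSL : qL ∈ SL := by
          rw [hSL, Finset.mem_filter]
          exact ⟨hqLS, fun hPq => half_disj ipL ⟨hipL, hPq ipL hqLcov⟩⟩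
        set n := SR.card with hn
        have hn1 : 1 ≤ n := Finset.card_pos.2 ⟨qR, hqRSR⟩
        have hnL : 1 ≤ SL.card := Finset.card_pos.2 ⟨qL, hqLSL⟩
        have hn2 : n ≤ F - 1 := by omega
        have haMem : (∑ q ∈ SL, ∑ ip ∈ WL.filter (fun ip => inI w q ip), wgt ip) ∈
            zSet w BL WL wgt (2 * p, l + 1) (F - n) := by
          refine ⟨SL, ?_, by omega, ?_, ?_, rfl⟩
          · intro q hq
            have hqS : q ∈ S := Finset.mem_of_mem_filter _ hq
            exact ⟨(hS1 q hqS).1, hmemL q hq⟩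
          · intro q hq q' hq' hne
            exact hS3 q (Finset.mem_of_mem_filter _ hq) q' (Finset.mem_of_mem_filter _ hq') hne
          · intro ip hip hin
            obtain ⟨q, hqS, hcov⟩ := hS4 ip hip (left_sub hl hin)
            refine ⟨q, ?_, hcov⟩
            rw [hSL, Finset.mem_filter]
            exact ⟨hqS, fun hPq => half_disj ip ⟨hin, hPq ip hcov⟩⟩
        have hbMem : (∑ q ∈ SR, ∑ ip ∈ WL.filter (fun ip => inI w q ip), wgt ip) ∈
            zSet w BL WL wgt (2 * p + 1, l + 1) n := by
          refine ⟨SR, ?_, le_rfl, ?_, ?_, rfl⟩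
          · intro q hq
            have hqS : q ∈ S := Finset.mem_of_mem_filter _ hq
            exact ⟨(hS1 q hqS).1, (Finset.mem_filter.1 hq).2⟩
          · intro q hq q' hq' hne
            exact hS3 q (Finset.mem_of_mem_filter _ hq) q' (Finset.mem_of_mem_filter _ hq') hne
          · intro ip hip hin
            obtain ⟨q, hqS, hcov⟩ := hS4 ip hip (right_sub hl hin)
            refine ⟨q, ?_, hcov⟩
            rw [hSR, Finset.mem_filter]
            refine ⟨hqS, ?_⟩
            rcases hdi q hqS with h | h
            · exact absurd ⟨h ip hcov, hin⟩ (half_disj ip)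
            · exact h
        have hxsum : (∑ q ∈ S, ∑ ip ∈ WL.filter (fun ip => inI w q ip), wgt ip) =
            (∑ q ∈ SL, ∑ ip ∈ WL.filter (fun ip => inI w q ip), wgt ip) +
            (∑ q ∈ SR, ∑ ip ∈ WL.filter (fun ip => inI w q ip), wgt ip) := by
          rw [hSL, hSR, add_comm]
          exact (Finset.sum_filter_add_sum_filter_not S P _).symm
        have hzL := zBA_le_of_mem hwgt haMem
        have hzR := zBA_le_of_mem hwgt hbMem
        have hinf : sInf {x : ℝ | ∃ n, 1 ≤ n ∧ n ≤ F - 1 ∧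
            x = zBA w BL WL wgt (2 * p, l + 1) (F - n) +
                zBA w BL WL wgt (2 * p + 1, l + 1) n} ≤
            zBA w BL WL wgt (2 * p, l + 1) (F - n) + zBA w BL WL wgt (2 * p + 1, l + 1) n :=
          csInf_le hRbdd ⟨n, hn1, hn2, rfl⟩
        linarith
  · refine le_antisymm (zBA_le_of_mem hwgt (singleton_mem hDval le_rfl)) ?_
    refine le_csInf (hneD 1 le_rfl) ?_
    rintro x ⟨S, hS1, hS2, hS3, hS4, rfl⟩
    obtain ⟨q, hqS, hcovL⟩ := hS4 ipL hipLB (left_sub hl hipL)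
    obtain ⟨q', hq'S, hcovR⟩ := hS4 ipR hipRB (right_sub hl hipR)
    have hqq : q' = q := Finset.card_le_one.1 hS2 q' hq'S q hqS
    subst hqq
    rcases dichotomy hl (hS1 q' hq'S).1.1 (hS1 q' hq'S).2 with h | h | h
    · exact absurd ⟨h ipR hcovR, hipR⟩ (half_disj ipR)
    · exact absurd ⟨hipL, h ipL hcovL⟩ (half_disj ipL)
    · have hSsing : S = {q'} :=
        Finset.eq_singleton_iff_unique_mem.2
          ⟨hq'S, fun b hb => Finset.card_le_one.1 hS2 b hb q' hq'S⟩
      rw [hSsing, Finset.sum_singleton]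
      apply le_of_eq
      congr 1
      ext ip
      simp only [Finset.mem_filter]
      exact and_congr_right fun _ => ⟨fun hh => h ip hh, fun hh => (hS1 q' hq'S).2 ip hh⟩
end

section
/- BLOCK-SOME degenerates to BLOCK-ALL under dominant bad weights: suppose every bad weight satisfies b(ip) > Σ_{jp ∈ WL} w(jp) (each bad address outweighs the entire whitelist), BL ≠ ∅ and F ≥ 1. Then every optimal solution of BLOCK-SOME with budget F covers all of BL, and its collateral damage equals the optimal value CD(F) of BLOCK-ALL. -/
lemma inI_zero (w ip : ℕ) : inI w (0,0) ip ↔ ip < 2 ^ w := by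
  simp [inI]

lemma sub0 {w : ℕ} {q : ℕ × ℕ} (hv : ValidPrefix w q) {ip : ℕ} (hi : inI w q ip) :
    inI w (0,0) ip := by
  rw [inI_zero]
  calc ip < (q.1 + 1) * 2 ^ (w - q.2) := hi.2
    _ ≤ 2 ^ q.2 * 2 ^ (w - q.2) := Nat.mul_le_mul_right _ hv.2
    _ = 2 ^ (q.2 + (w - q.2)) := (pow_add 2 _ _).symm
    _ = 2 ^ w := by rw [Nat.add_sub_cancel' hv.1]

lemma cover_sum (w : ℕ) (S : Finset (ℕ × ℕ)) (hS : PairwiseDisjointI w S)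
    (A : Finset ℕ) (f : ℕ → ℝ) :
    ∑ q ∈ S, ∑ ip ∈ A.filter (fun ip => inI w q ip), f ip
      = ∑ ip ∈ A.filter (fun ip => ∃ q ∈ S, inI w q ip), f ip := by
  rw [← Finset.sum_biUnion]
  · congr 1
    ext ip
    simp only [Finset.mem_biUnion, Finset.mem_filter]
    tauto
  · intro q hq q' hq' hne
    apply Finset.disjoint_left.mpr
    intro ip hip hip'
    simp only [Finset.mem_filter, Finset.mem_coe] at hip hip'
    exact hS q hq q' hq' hne ip ⟨hip.2, hip'.2⟩


/-- `zBS w BL WL bw wgt D F`: BLOCK-SOME optimum on `D` with at most `F` filters: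
minimum of (good weight blocked) − (bad weight blocked) over families of at most `F`
pairwise-disjoint dyadic subintervals of `D`. -/
noncomputable def zBS (w : ℕ) (BL WL : Finset ℕ) (bw wgt : ℕ → ℝ) (D : ℕ × ℕ) (F : ℕ) : ℝ :=
  sInf {x : ℝ | ∃ S : Finset (ℕ × ℕ),
    (∀ q ∈ S, ValidPrefix w q ∧ ∀ ip, inI w q ip → inI w D ip) ∧
    S.card ≤ F ∧ PairwiseDisjointI w S ∧
    x = (∑ q ∈ S, ∑ ip ∈ WL.filter (fun ip => inI w q ip), wgt ip) -
        (∑ q ∈ S, ∑ ip ∈ BL.filter (fun ip => inI w q ip), bw ip)}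

/-- If every bad weight exceeds the total good weight, every optimal BLOCK-SOME solution
covers the whole blacklist and its collateral damage equals the BLOCK-ALL optimum. -/
theorem stmt13 (w F : ℕ) (BL WL : Finset ℕ) (bw wgt : ℕ → ℝ)
    (hdisj : Disjoint BL WL)
    (hBLsub : ∀ ip ∈ BL, ip < 2 ^ w) (hWLsub : ∀ ip ∈ WL, ip < 2 ^ w)
    (hb : ∀ ip ∈ BL, 0 ≤ bw ip) (hwgt : ∀ ip ∈ WL, 0 ≤ wgt ip)
    (hdom : ∀ ip ∈ BL, (∑ jp ∈ WL, wgt jp) < bw ip)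
    (hBL : BL.Nonempty) (hF : 1 ≤ F)
    (S : Finset (ℕ × ℕ))
    (hvalid : ∀ q ∈ S, ValidPrefix w q)
    (hcard : S.card ≤ F)
    (hS : PairwiseDisjointI w S)
    (hopt : (∑ q ∈ S, ∑ ip ∈ WL.filter (fun ip => inI w q ip), wgt ip) -
        (∑ q ∈ S, ∑ ip ∈ BL.filter (fun ip => inI w q ip), bw ip) =
      zBS w BL WL bw wgt (0, 0) F) :
    (∀ ip ∈ BL, ∃ q ∈ S, inI w q ip) ∧
    (∑ q ∈ S, ∑ ip ∈ WL.filter (fun ip => inI w q ip), wgt ip) =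
      zBA w BL WL wgt (0, 0) F := by
  classical
  set BSset := {x : ℝ | ∃ T : Finset (ℕ × ℕ),
    (∀ q ∈ T, ValidPrefix w q ∧ ∀ ip, inI w q ip → inI w (0,0) ip) ∧
    T.card ≤ F ∧ PairwiseDisjointI w T ∧
    x = (∑ q ∈ T, ∑ ip ∈ WL.filter (fun ip => inI w q ip), wgt ip) -
        (∑ q ∈ T, ∑ ip ∈ BL.filter (fun ip => inI w q ip), bw ip)} with hBSset
  have hzBS : zBS w BL WL bw wgt (0,0) F = sInf BSset := rfl
  -- generic bounds on good/bad of any disjoint family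
  have hgoodnn : ∀ T : Finset (ℕ × ℕ),
      (0:ℝ) ≤ ∑ q ∈ T, ∑ ip ∈ WL.filter (fun ip => inI w q ip), wgt ip := by
    intro T
    refine Finset.sum_nonneg fun q _ => Finset.sum_nonneg fun ip hip => ?_
    exact hwgt ip (Finset.mem_filter.mp hip).1
  have hbadle : ∀ T : Finset (ℕ × ℕ), PairwiseDisjointI w T →
      (∑ q ∈ T, ∑ ip ∈ BL.filter (fun ip => inI w q ip), bw ip) ≤ ∑ ip ∈ BL, bw ip := by
    intro T hT
    rw [cover_sum w T hT]
    exact Finset.sum_le_sum_of_subset_of_nonneg (Finset.filter_subset _ _)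
      (fun i h _ => hb i h)
  have hbdd : BddBelow BSset := by
    refine ⟨-(∑ ip ∈ BL, bw ip), ?_⟩
    rintro x ⟨T, _, _, hTdisj, rfl⟩
    have := hgoodnn T
    have := hbadle T hTdisj
    linarith
  -- the singleton filter {(0,0)}
  have hfull : ((∑ ip ∈ WL, wgt ip) - ∑ ip ∈ BL, bw ip) ∈ BSset := by
    refine ⟨{(0,0)}, ?_, ?_, ?_, ?_⟩
    · intro q hq
      rw [Finset.mem_singleton] at hq
      subst hq
      exact ⟨⟨Nat.zero_le w, by norm_num⟩, fun ip h => h⟩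
    · simpa using hF
    · intro q hq q' hq' hne
      rw [Finset.mem_singleton] at hq hq'
      exact absurd (hq.trans hq'.symm) hne
    · rw [Finset.sum_singleton, Finset.sum_singleton,
        Finset.filter_true_of_mem (fun ip h => (inI_zero w ip).mpr (hWLsub ip h)),
        Finset.filter_true_of_mem (fun ip h => (inI_zero w ip).mpr (hBLsub ip h))]
  have hSle : (∑ q ∈ S, ∑ ip ∈ WL.filter (fun ip => inI w q ip), wgt ip) -
      (∑ q ∈ S, ∑ ip ∈ BL.filter (fun ip => inI w q ip), bw ip) ≤
      (∑ ip ∈ WL, wgt ip) - ∑ ip ∈ BL, bw ip := by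
    rw [hopt, hzBS]; exact csInf_le hbdd hfull
  -- Part 1: coverage
  have hcover : ∀ ip ∈ BL, ∃ q ∈ S, inI w q ip := by
    by_contra hc
    push_neg at hc
    obtain ⟨ip0, hip0, hnone⟩ := hc
    have hsub : BL.filter (fun ip => ∃ q ∈ S, inI w q ip) ⊆ BL.erase ip0 := by
      intro ip hip
      rw [Finset.mem_filter] at hip
      refine Finset.mem_erase.mpr ⟨?_, hip.1⟩
      rintro rfl
      obtain ⟨q, hq, hiq⟩ := hip.2
      exact hnone q hq hiq
    have h1 : (∑ q ∈ S, ∑ ip ∈ BL.filter (fun ip => inI w q ip), bw ip)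
        ≤ ∑ ip ∈ BL.erase ip0, bw ip := by
      rw [cover_sum w S hS]
      exact Finset.sum_le_sum_of_subset_of_nonneg hsub
        (fun i h _ => hb i (Finset.mem_of_mem_erase h))
    have h2 : ∑ ip ∈ BL.erase ip0, bw ip + bw ip0 = ∑ ip ∈ BL, bw ip :=
      Finset.sum_erase_add BL bw hip0
    have h3 := hgoodnn S
    have h4 := hdom ip0 hip0
    linarith
  refine ⟨hcover, ?_⟩
  -- badS = total bad
  have hbadeq : ∀ T : Finset (ℕ × ℕ), PairwiseDisjointI w T →
      (∀ ip ∈ BL, ∃ q ∈ T, inI w q ip) →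
      (∑ q ∈ T, ∑ ip ∈ BL.filter (fun ip => inI w q ip), bw ip) = ∑ ip ∈ BL, bw ip := by
    intro T hT hTc
    rw [cover_sum w T hT, Finset.filter_true_of_mem hTc]
  set BAset := {x : ℝ | ∃ T : Finset (ℕ × ℕ),
    (∀ q ∈ T, ValidPrefix w q ∧ ∀ ip, inI w q ip → inI w (0,0) ip) ∧
    T.card ≤ F ∧ PairwiseDisjointI w T ∧
    (∀ ip ∈ BL, inI w (0,0) ip → ∃ q ∈ T, inI w q ip) ∧
    x = ∑ q ∈ T, ∑ ip ∈ WL.filter (fun ip => inI w q ip), wgt ip} with hBAset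
  have hzBA : zBA w BL WL wgt (0,0) F = sInf BAset := rfl
  have hSmem : (∑ q ∈ S, ∑ ip ∈ WL.filter (fun ip => inI w q ip), wgt ip) ∈ BAset := by
    refine ⟨S, fun q hq => ⟨hvalid q hq, fun ip h => sub0 (hvalid q hq) h⟩,
      hcard, hS, fun ip h _ => hcover ip h, rfl⟩
  have hBAbdd : BddBelow BAset := by
    refine ⟨0, ?_⟩
    rintro x ⟨T, _, _, _, _, rfl⟩
    exact hgoodnn T
  refine le_antisymm ?_ ?_
  · rw [hzBA]
    refine le_csInf ⟨_, hSmem⟩ ?_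
    rintro x ⟨T, hTsub, hTcard, hTdisj, hTcov, rfl⟩
    have hTcov' : ∀ ip ∈ BL, ∃ q ∈ T, inI w q ip := fun ip h =>
      hTcov ip h ((inI_zero w ip).mpr (hBLsub ip h))
    have hmemT : (∑ q ∈ T, ∑ ip ∈ WL.filter (fun ip => inI w q ip), wgt ip) -
        (∑ q ∈ T, ∑ ip ∈ BL.filter (fun ip => inI w q ip), bw ip) ∈ BSset :=
      ⟨T, hTsub, hTcard, hTdisj, rfl⟩
    have hle : zBS w BL WL bw wgt (0,0) F ≤
        (∑ q ∈ T, ∑ ip ∈ WL.filter (fun ip => inI w q ip), wgt ip) -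
        (∑ q ∈ T, ∑ ip ∈ BL.filter (fun ip => inI w q ip), bw ip) := by
      rw [hzBS]; exact csInf_le hbdd hmemT
    rw [← hopt] at hle
    rw [hbadeq S hS hcover, hbadeq T hTdisj hTcov'] at hle
    linarith
  · rw [hzBA]
    exact csInf_le hBAbdd hSmem
end
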